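/- Let k ∈ ℕ and let I : (0,δ) → (0,∞) satisfy ε²|log ε|/I(ε)² → 0 as ε → 0. Let R^ε be the I(ε)²-truncated α/2-stable subordinator normalized so that E[R^ε_s] = s. Then there exists ε_k > 0 such that for all ε ∈ (0, ε_k) and all s ≤ ε²|log ε|, P(|R^ε_s − s| ≥ (k+1) I(ε)² |log ε|) ≤ ε^k. -/

import Mathlib

open MeasureTheory Filter

-- auxiliary: e^x - 1 ≤ x e^x for x ≥ 0
lemma aux_exp_sub_one_le (x : ℝ) (hx : 0 ≤ x) : Real.exp x - 1 ≤ x * Real.exp x := by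
  have h := Real.add_one_le_exp (-x)
  have h2 : Real.exp (-x) * Real.exp x = 1 := by
    rw [← Real.exp_add]; simp
  nlinarith [Real.exp_pos x]

-- auxiliary: the J bound
lemma aux_J_bound (α : ℝ) (hα0 : 0 < α) (hα2 : α < 2) (M lam : ℝ) (hM : 0 < M) (hlam : 0 < lam) :
    ∫ y in Set.Ioc (0:ℝ) M, (Real.exp (lam * y) - 1) * y ^ (-1 - α/2)
      ≤ lam * Real.exp (lam * M) * (M ^ (1 - α/2) / (1 - α/2)) := by
  have hexp : -1 < -α/2 := by linarith
  have hint : IntegrableOn (fun y : ℝ => lam * Real.exp (lam * M) * y ^ (-α/2))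
      (Set.Ioc 0 M) volume := by
    have := (intervalIntegral.intervalIntegrable_rpow' (a := 0) (b := M) hexp).1
    exact this.const_mul _
  have key : ∫ y in Set.Ioc (0:ℝ) M, (Real.exp (lam * y) - 1) * y ^ (-1 - α/2)
      ≤ ∫ y in Set.Ioc (0:ℝ) M, lam * Real.exp (lam * M) * y ^ (-α/2) := by
    refine integral_mono_of_nonneg ?_ hint ?_
    · filter_upwards [ae_restrict_mem measurableSet_Ioc] with y hy
      have hy0 : 0 < y := hy.1
      have : 1 ≤ Real.exp (lam * y) := by
        rw [← Real.exp_zero]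
        exact Real.exp_le_exp.2 (by positivity)
      have := Real.rpow_nonneg hy0.le (-1 - α/2)
      simp only [Pi.zero_apply]
      nlinarith
    · filter_upwards [ae_restrict_mem measurableSet_Ioc] with y hy
      have hy0 : 0 < y := hy.1
      have h1 : Real.exp (lam * y) - 1 ≤ lam * y * Real.exp (lam * M) := by
        have := aux_exp_sub_one_le (lam * y) (by positivity)
        have h2 : Real.exp (lam * y) ≤ Real.exp (lam * M) :=
          Real.exp_le_exp.2 (by nlinarith [hy.2])
        nlinarith [Real.exp_pos (lam * y), mul_pos hlam hy0]
      have hsplit : y ^ (-1 - α/2) = y⁻¹ * y ^ (-α/2) := by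
        rw [show (-1 - α/2 : ℝ) = -1 + (-α/2) by ring, Real.rpow_add hy0,
          Real.rpow_neg_one]
      rw [hsplit]
      have hr : (0:ℝ) ≤ y ^ (-α/2) := Real.rpow_nonneg hy0.le _
      have hy' : y * y⁻¹ = 1 := mul_inv_cancel₀ hy0.ne'
      have h3 : (Real.exp (lam * y) - 1) * y⁻¹ ≤ lam * Real.exp (lam * M) := by
        calc (Real.exp (lam * y) - 1) * y⁻¹
            ≤ (lam * y * Real.exp (lam * M)) * y⁻¹ :=
              mul_le_mul_of_nonneg_right h1 (inv_nonneg.2 hy0.le)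
          _ = lam * Real.exp (lam * M) * (y * y⁻¹) := by ring
          _ = lam * Real.exp (lam * M) := by rw [hy', mul_one]
      nlinarith [mul_le_mul_of_nonneg_right h3 hr]
  have hval : ∫ y in Set.Ioc (0:ℝ) M, (y:ℝ) ^ (-α/2) = M ^ (1 - α/2) / (1 - α/2) := by
    rw [← intervalIntegral.integral_of_le hM.le, integral_rpow (Or.inl hexp)]
    rw [Real.zero_rpow (by linarith), show (-α/2 + 1 : ℝ) = 1 - α/2 by ring]
    ring
  calc _ ≤ _ := key
    _ = lam * Real.exp (lam * M) * ∫ y in Set.Ioc (0:ℝ) M, (y:ℝ) ^ (-α/2) :=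
        integral_const_mul _ _
    _ = _ := by rw [hval]

lemma aux_alg (α Iε : ℝ) (hα0 : 0 < α) (hα2 : α < 2) (hIε : 0 < Iε) :
    ((α/2) * ((2-α)/α) ^ (α/2) * Iε ^ (α-2)) *
      ((Iε^2)⁻¹ * Real.exp ((Iε^2)⁻¹ * ((2-α)/α * Iε^2)) *
        (((2-α)/α * Iε^2) ^ (1 - α/2) / (1 - α/2)))
      = Real.exp ((2-α)/α) * (Iε^2)⁻¹ := by
  set K := (2-α)/α with hKdef
  have hK : 0 < K := div_pos (by linarith) hα0
  have h2 : (0:ℝ) < Iε^2 := by positivity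
  have h15 : (1:ℝ) - α/2 ≠ 0 := by intro h; linarith [sub_eq_zero.mp h]
  have e1 : (Iε^2)⁻¹ * (K * Iε^2) = K := by field_simp
  have e2 : (K * Iε^2 : ℝ) ^ (1 - α/2) = K ^ (1 - α/2) * Iε ^ (2-α) := by
    rw [Real.mul_rpow hK.le h2.le]
    congr 1
    rw [← Real.rpow_natCast Iε 2, ← Real.rpow_mul hIε.le]
    norm_num
    congr 1
    ring
  have e3 : Iε ^ (α-2) * Iε ^ (2-α) = 1 := by
    rw [← Real.rpow_add hIε]
    norm_num
  have e4 : K ^ (α/2) * K ^ (1 - α/2) = K := by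
    rw [← Real.rpow_add hK, show α/2 + (1 - α/2) = (1:ℝ) by ring, Real.rpow_one]
  have e5 : (α/2) * K = 1 - α/2 := by
    rw [hKdef]; field_simp
  rw [e1, e2]
  calc (α/2) * K ^ (α/2) * Iε ^ (α-2) *
        ((Iε^2)⁻¹ * Real.exp K * (K ^ (1 - α/2) * Iε ^ (2-α) / (1 - α/2)))
      = ((α/2) * (K ^ (α/2) * K ^ (1 - α/2)) * (Iε ^ (α-2) * Iε ^ (2-α)) / (1 - α/2)) *
        (Real.exp K * (Iε^2)⁻¹) := by ring
    _ = (((α/2) * K) / (1 - α/2)) * (Real.exp K * (Iε^2)⁻¹) := by rw [e4, e3]; ring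
    _ = Real.exp K * (Iε^2)⁻¹ := by rw [e5, div_self h15, one_mul]

/-- Deviation bound for the truncated stable subordinator: if `I` satisfies
`ε²|log ε|/I(ε)² → 0`, then for small `ε` and `s ≤ ε²|log ε|`,
`P(|R^ε_s − s| ≥ (k+1) I(ε)² |log ε|) ≤ ε^k`. The family `R` is characterised
through its moment generating functions. -/
theorem stmt16 (α : ℝ) (hα : α ∈ Set.Ioo (0:ℝ) 2) (k : ℕ)
    (δ : ℝ) (hδ : 0 < δ) (I : ℝ → ℝ) (hI : ∀ ε ∈ Set.Ioo (0:ℝ) δ, 0 < I ε)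
    (hB : Tendsto (fun ε => ε^2 * |Real.log ε| / (I ε)^2)
      (nhdsWithin 0 (Set.Ioo (0:ℝ) δ)) (nhds 0))
    (Ω : Type*) [MeasureSpace Ω] [IsProbabilityMeasure (volume : Measure Ω)]
    (R : ℝ → ℝ → Ω → ℝ)
    (hmeas : ∀ ε s, Measurable (R ε s))
    (hR0 : ∀ ε s ω, 0 ≤ R ε s ω)
    (hMGF : ∀ ε ∈ Set.Ioo (0:ℝ) δ, ∀ s : ℝ, 0 ≤ s → ∀ lam : ℝ,
      ∫ ω, Real.exp (lam * R ε s ω) =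
        Real.exp (s * ((α/2) * ((2-α)/α) ^ (α/2) * (I ε) ^ (α-2)) *
          ∫ y in Set.Ioc (0:ℝ) (((2-α)/α) * (I ε)^2),
            (Real.exp (lam * y) - 1) * y ^ (-1 - α/2))) :
    ∃ εk > (0:ℝ), ∀ ε : ℝ, 0 < ε → ε < εk → ε < δ →
      ∀ s : ℝ, 0 ≤ s → s ≤ ε^2 * |Real.log ε| →
        (volume {ω | (k+1 : ℝ) * (I ε)^2 * |Real.log ε| ≤ |R ε s ω - s|})
          ≤ ENNReal.ofReal (ε^k) := by
  obtain ⟨hα0, hα2⟩ := hα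
  have hK : 0 < (2-α)/α := div_pos (by linarith) hα0
  have hr : 0 < min (1/2) (Real.exp (-((2-α)/α))) := lt_min (by norm_num) (Real.exp_pos _)
  have hev : {x : ℝ | |x^2 * |Real.log x| / (I x)^2| < min (1/2) (Real.exp (-((2-α)/α)))}
      ∈ nhdsWithin 0 (Set.Ioo 0 δ) := by
    have := hB (Metric.ball_mem_nhds 0 hr)
    simpa [Metric.ball, Real.dist_eq] using this
  obtain ⟨η, hη, hsub⟩ := Metric.mem_nhdsWithin_iff.1 hev
  refine ⟨min η (Real.exp (-1)), lt_min hη (Real.exp_pos _), ?_⟩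
  intro ε hε0 hεk hεδ s hs0 hsB
  have hεδ' : ε ∈ Set.Ioo (0:ℝ) δ := ⟨hε0, hεδ⟩
  have hIε : 0 < I ε := hI ε hεδ'
  have hεη : ε < η := lt_of_lt_of_le hεk (min_le_left _ _)
  have hsmall : |ε^2 * |Real.log ε| / (I ε)^2| < min (1/2) (Real.exp (-((2-α)/α))) :=
    hsub ⟨by simpa [Real.dist_eq, abs_of_pos hε0] using hεη, hεδ'⟩
  have hεe : ε < Real.exp (-1) := lt_of_lt_of_le hεk (min_le_right _ _)
  have hlog : Real.log ε < -1 := by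
    have := Real.log_lt_log hε0 hεe
    rwa [Real.log_exp] at this
  have hlogneg : Real.log ε < 0 := by linarith
  have hLeq : |Real.log ε| = -Real.log ε := abs_of_neg hlogneg
  have hL1 : 1 ≤ |Real.log ε| := by rw [hLeq]; linarith
  have hL0 : 0 < |Real.log ε| := by linarith
  have hsm : ε^2 * |Real.log ε| / (I ε)^2 < min (1/2) (Real.exp (-((2-α)/α))) := by
    rwa [abs_of_nonneg (by positivity)] at hsmall
  have hlam : 0 < ((I ε)^2)⁻¹ := by positivity
  have hM0 : 0 < (2-α)/α * (I ε)^2 := by positivity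
  -- s < threshold
  have hsthr : s < (k+1:ℝ) * (I ε)^2 * |Real.log ε| := by
    have h1 : ε^2 * |Real.log ε| < min (1/2) (Real.exp (-((2-α)/α))) * (I ε)^2 := by
      rw [div_lt_iff₀ (by positivity)] at hsm; linarith
    have h2 : min (1/2) (Real.exp (-((2-α)/α))) ≤ 1/2 := min_le_left _ _
    have hI2 : (0:ℝ) < (I ε)^2 := by positivity
    have hk0 : (0:ℝ) ≤ (k:ℝ) := Nat.cast_nonneg k
    nlinarith [mul_pos hI2 hL0]
  -- event inclusion
  have hincl : {ω | (k+1:ℝ) * (I ε)^2 * |Real.log ε| ≤ |R ε s ω - s|} ⊆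
      {ω | Real.exp (((I ε)^2)⁻¹ * (s + (k+1:ℝ) * (I ε)^2 * |Real.log ε|)) ≤
        Real.exp (((I ε)^2)⁻¹ * R ε s ω)} := by
    intro ω hω
    simp only [Set.mem_setOf_eq] at hω ⊢
    have hR := hR0 ε s ω
    have hge : (k+1:ℝ) * (I ε)^2 * |Real.log ε| ≤ R ε s ω - s := by
      rcases abs_cases (R ε s ω - s) with ⟨h, _⟩ | ⟨h, _⟩
      · linarith
      · linarith
    exact Real.exp_le_exp.2 (by nlinarith)
  -- MGF and integrability
  have hMGFε := hMGF ε hεδ' s hs0 ((I ε)^2)⁻¹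
  have hpos := Real.exp_pos (s * ((α/2) * ((2-α)/α) ^ (α/2) * (I ε) ^ (α-2)) *
          ∫ y in Set.Ioc (0:ℝ) (((2-α)/α) * (I ε)^2),
            (Real.exp (((I ε)^2)⁻¹ * y) - 1) * y ^ (-1 - α/2))
  have hint : Integrable (fun ω => Real.exp (((I ε)^2)⁻¹ * R ε s ω)) := by
    by_contra h
    rw [integral_undef h] at hMGFε
    exact hpos.ne hMGFε
  -- Markov
  have hmark := mul_meas_ge_le_integral_of_nonneg (μ := (volume : Measure Ω))
    (ae_of_all _ fun ω => (Real.exp_pos (((I ε)^2)⁻¹ * R ε s ω)).le) hint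
    (Real.exp (((I ε)^2)⁻¹ * (s + (k+1:ℝ) * (I ε)^2 * |Real.log ε|)))
  -- bound on exponent
  have hc : (0:ℝ) ≤ (α/2) * ((2-α)/α) ^ (α/2) * (I ε) ^ (α-2) := by positivity
  have hJb := aux_J_bound α hα0 hα2 ((2-α)/α * (I ε)^2) ((I ε)^2)⁻¹ hM0 hlam
  have halg := aux_alg α (I ε) hα0 hα2 hIε
  have hcJ : ((α/2) * ((2-α)/α) ^ (α/2) * (I ε) ^ (α-2)) *
      ∫ y in Set.Ioc (0:ℝ) (((2-α)/α) * (I ε)^2),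
        (Real.exp (((I ε)^2)⁻¹ * y) - 1) * y ^ (-1 - α/2)
      ≤ Real.exp ((2-α)/α) * ((I ε)^2)⁻¹ := by
    calc _ ≤ ((α/2) * ((2-α)/α) ^ (α/2) * (I ε) ^ (α-2)) *
        (((I ε)^2)⁻¹ * Real.exp (((I ε)^2)⁻¹ * ((2-α)/α * (I ε)^2)) *
          (((2-α)/α * (I ε)^2) ^ (1 - α/2) / (1 - α/2))) :=
        mul_le_mul_of_nonneg_left hJb hc
      _ = Real.exp ((2-α)/α) * ((I ε)^2)⁻¹ := halg
  have hexpb : s * ((α/2) * ((2-α)/α) ^ (α/2) * (I ε) ^ (α-2)) *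
      (∫ y in Set.Ioc (0:ℝ) (((2-α)/α) * (I ε)^2),
        (Real.exp (((I ε)^2)⁻¹ * y) - 1) * y ^ (-1 - α/2)) ≤ |Real.log ε| := by
    have h1 : s * (((α/2) * ((2-α)/α) ^ (α/2) * (I ε) ^ (α-2)) *
        ∫ y in Set.Ioc (0:ℝ) (((2-α)/α) * (I ε)^2),
          (Real.exp (((I ε)^2)⁻¹ * y) - 1) * y ^ (-1 - α/2))
        ≤ s * (Real.exp ((2-α)/α) * ((I ε)^2)⁻¹) := mul_le_mul_of_nonneg_left hcJ hs0
    have h2 : s * (Real.exp ((2-α)/α) * ((I ε)^2)⁻¹) ≤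
        ε^2 * |Real.log ε| * (Real.exp ((2-α)/α) * ((I ε)^2)⁻¹) :=
      mul_le_mul_of_nonneg_right hsB (by positivity)
    have h3 : ε^2 * |Real.log ε| / ((I ε)^2) ≤ Real.exp (-((2-α)/α)) :=
      le_trans hsm.le (min_le_right _ _)
    have h4 : ε^2 * |Real.log ε| * (Real.exp ((2-α)/α) * ((I ε)^2)⁻¹) =
        (ε^2 * |Real.log ε| / ((I ε)^2)) * Real.exp ((2-α)/α) := by ring
    have h5 : (ε^2 * |Real.log ε| / ((I ε)^2)) * Real.exp ((2-α)/α) ≤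
        Real.exp (-((2-α)/α)) * Real.exp ((2-α)/α) :=
      mul_le_mul_of_nonneg_right h3 (Real.exp_pos _).le
    have h6 : Real.exp (-((2-α)/α)) * Real.exp ((2-α)/α) = 1 := by
      rw [← Real.exp_add]; simp
    have hassoc : s * ((α/2) * ((2-α)/α) ^ (α/2) * (I ε) ^ (α-2)) *
        (∫ y in Set.Ioc (0:ℝ) (((2-α)/α) * (I ε)^2),
          (Real.exp (((I ε)^2)⁻¹ * y) - 1) * y ^ (-1 - α/2)) =
        s * (((α/2) * ((2-α)/α) ^ (α/2) * (I ε) ^ (α-2)) *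
        ∫ y in Set.Ioc (0:ℝ) (((2-α)/α) * (I ε)^2),
          (Real.exp (((I ε)^2)⁻¹ * y) - 1) * y ^ (-1 - α/2)) := mul_assoc _ _ _
    linarith
  -- lam * thr
  have hlt : ((I ε)^2)⁻¹ * ((k+1:ℝ) * (I ε)^2 * |Real.log ε|) = (k+1:ℝ) * |Real.log ε| := by
    have : (I ε)^2 ≠ 0 := by positivity
    field_simp
  -- final ratio bound
  have hratio : Real.exp (s * ((α/2) * ((2-α)/α) ^ (α/2) * (I ε) ^ (α-2)) *
      ∫ y in Set.Ioc (0:ℝ) (((2-α)/α) * (I ε)^2),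
        (Real.exp (((I ε)^2)⁻¹ * y) - 1) * y ^ (-1 - α/2)) /
      Real.exp (((I ε)^2)⁻¹ * (s + (k+1:ℝ) * (I ε)^2 * |Real.log ε|)) ≤ ε^k := by
    rw [← Real.exp_sub]
    have harg : s * ((α/2) * ((2-α)/α) ^ (α/2) * (I ε) ^ (α-2)) *
        (∫ y in Set.Ioc (0:ℝ) (((2-α)/α) * (I ε)^2),
          (Real.exp (((I ε)^2)⁻¹ * y) - 1) * y ^ (-1 - α/2)) -
        ((I ε)^2)⁻¹ * (s + (k+1:ℝ) * (I ε)^2 * |Real.log ε|) ≤ (k:ℝ) * Real.log ε := by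
      have hsplit : ((I ε)^2)⁻¹ * (s + (k+1:ℝ) * (I ε)^2 * |Real.log ε|) =
          ((I ε)^2)⁻¹ * s + (k+1:ℝ) * |Real.log ε| := by
        rw [mul_add, hlt]
      have hls : 0 ≤ ((I ε)^2)⁻¹ * s := by positivity
      have hkl : (k:ℝ) * Real.log ε = -((k:ℝ) * |Real.log ε|) := by rw [hLeq]; ring
      rw [hsplit, hkl]
      push_cast
      linarith
    calc Real.exp _ ≤ Real.exp ((k:ℝ) * Real.log ε) := Real.exp_le_exp.2 harg
      _ = ε^k := by
        rw [Real.exp_nat_mul, Real.exp_log hε0]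
  -- combine
  have hfin : volume {ω | (k+1:ℝ) * (I ε)^2 * |Real.log ε| ≤ |R ε s ω - s|}
      ≤ volume {ω | Real.exp (((I ε)^2)⁻¹ * (s + (k+1:ℝ) * (I ε)^2 * |Real.log ε|)) ≤
          Real.exp (((I ε)^2)⁻¹ * R ε s ω)} := measure_mono hincl
  refine le_trans hfin ?_
  set S := {ω | Real.exp (((I ε)^2)⁻¹ * (s + (k+1:ℝ) * (I ε)^2 * |Real.log ε|)) ≤
      Real.exp (((I ε)^2)⁻¹ * R ε s ω)} with hS
  have hSfin : volume S ≠ ⊤ := measure_ne_top _ _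
  have ha : (0:ℝ) < Real.exp (((I ε)^2)⁻¹ * (s + (k+1:ℝ) * (I ε)^2 * |Real.log ε|)) :=
    Real.exp_pos _
  have htr : (volume S).toReal ≤ ε^k := by
    have := hmark
    rw [hMGFε] at this
    have h7 : (volume S).toReal ≤ Real.exp (s * ((α/2) * ((2-α)/α) ^ (α/2) * (I ε) ^ (α-2)) *
        ∫ y in Set.Ioc (0:ℝ) (((2-α)/α) * (I ε)^2),
          (Real.exp (((I ε)^2)⁻¹ * y) - 1) * y ^ (-1 - α/2)) /
        Real.exp (((I ε)^2)⁻¹ * (s + (k+1:ℝ) * (I ε)^2 * |Real.log ε|)) := by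
      rw [le_div_iff₀ ha]
      change _ * (volume S).toReal ≤ _ at this
      linarith [this]
    exact le_trans h7 hratio
  calc volume S = ENNReal.ofReal ((volume S).toReal) := (ENNReal.ofReal_toReal hSfin).symm
    _ ≤ ENNReal.ofReal (ε^k) := ENNReal.ofReal_le_ofReal htr
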